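/- Let (𝔪, ε) be a nonempty signed symmetric multisegment in the good-parity setting, with initial sequence Δ₁ ⪰ … ⪰ Δ_l and sign ε₀. If ε₀ = 1, then e(Δ₁) + e(Δ_l) ≠ 0. -/
import Mathlib


namespace AZ

/-- A segment in doubled coordinates: the pair `(a, b)` represents the segment
`[a/2, b/2]` whose endpoints lie in `(1/2)ℤ`.  Thus the end `e(Δ)` is `Δ.2 / 2`,
the beginning `b(Δ)` is `Δ.1 / 2`, `Δ` is centered iff `Δ.1 + Δ.2 = 0`, and
`c(Δ) = 1/2` iff `Δ.1 + Δ.2 = 2`. -/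
abbrev Seg := ℤ × ℤ

namespace Seg

/-- Well-formedness of a segment: `a ≤ b` and `a ≡ b [ZMOD 2]`, i.e. `b - a ∈ 2ℕ`. -/
def WF (Δ : Seg) : Prop := Δ.1 ≤ Δ.2 ∧ Δ.1 % 2 = Δ.2 % 2

/-- The dual (contragredient) segment `Δ∨ = [−b, −a]`. -/
def dual (Δ : Seg) : Seg := (-Δ.2, -Δ.1)

/-- `Δ⁻` : the segment with its end removed. -/
def trimEnd (Δ : Seg) : Seg := (Δ.1, Δ.2 - 2)

/-- `⁻Δ` : the segment with its beginning removed. -/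
def trimBeg (Δ : Seg) : Seg := (Δ.1 + 2, Δ.2)

/-- `⁺Δ` : the segment with its beginning extended. -/
def extBeg (Δ : Seg) : Seg := (Δ.1 - 2, Δ.2)

/-- The order on segments: `[x₁,y₁] ≤ [x₂,y₂]` iff `x₁ < x₂`, or `x₁ = x₂` and `y₁ ≥ y₂`. -/
def le (Δ₁ Δ₂ : Seg) : Prop := Δ₁.1 < Δ₂.1 ∨ (Δ₁.1 = Δ₂.1 ∧ Δ₂.2 ≤ Δ₁.2)

end Seg

/-- Labels `≤0`, `=0`, `≥0` for labeled segments. -/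
inductive Label
  | le0 | eq0 | ge0
deriving DecidableEq

/-- Numerical index of a label, used to order the labels `≤0 < =0 < ≥0`. -/
def Label.idx : Label → ℕ
  | .le0 => 0
  | .eq0 => 1
  | .ge0 => 2

/-- A labeled segment: a segment together with a label. -/
abbrev LSeg := Seg × Label

namespace LSeg

/-- The order `⪯` on labeled segments: segments labeled `≤0` precede those labeled `=0`,
which precede those labeled `≥0`; for equal labels `≥0` or `≤0` one compares the segments,
and for label `=0` one compares the ends. -/
def le (Λ₁ Λ₂ : LSeg) : Prop :=
  Λ₁.2.idx < Λ₂.2.idx ∨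
    (Λ₁.2 = Λ₂.2 ∧
      if Λ₁.2 = Label.eq0 then Λ₁.1.2 ≤ Λ₂.1.2 else Seg.le Λ₁.1 Λ₂.1)

/-- The strict order `≺` on labeled segments. -/
def lt (Λ₁ Λ₂ : LSeg) : Prop := LSeg.le Λ₁ Λ₂ ∧ Λ₁ ≠ Λ₂

/-- The contragredient of a labeled segment: for a centered segment the label `≤0`
becomes `≥0` and the labels `=0`, `≥0` are kept; for a non-centered segment the
label is flipped. -/
def dual (Λ : LSeg) : LSeg :=
  (Seg.dual Λ.1,
    if Λ.1.1 + Λ.1.2 = 0 then (if Λ.2 = Label.le0 then Label.ge0 else Λ.2)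
    else
      match Λ.2 with
      | Label.le0 => Label.ge0
      | Label.eq0 => Label.eq0
      | Label.ge0 => Label.le0)

end LSeg

/-- The forced label of a non-centered segment. -/
def forcedLabel (Δ : Seg) : Label := if 0 < Δ.1 + Δ.2 then Label.ge0 else Label.le0

/-- The labeling `s(𝔪)` of a multisegment: each non-centered segment gets its forced
label; a centered segment of multiplicity `m` contributes `⌊m/2⌋` copies labeled `≤0`,
`⌊m/2⌋` copies labeled `≥0`, and `m − 2⌊m/2⌋` copies labeled `=0`. -/
def smap (m : Multiset Seg) : Multiset LSeg :=
  (m.filter fun Δ => ¬ Δ.1 + Δ.2 = 0).map (fun Δ => (Δ, forcedLabel Δ)) +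
    (m.toFinset.filter fun Δ => Δ.1 + Δ.2 = 0).val.bind (fun Δ =>
      Multiset.replicate (m.count Δ / 2) (Δ, Label.le0) +
        Multiset.replicate (m.count Δ / 2) (Δ, Label.ge0) +
        Multiset.replicate (m.count Δ % 2) (Δ, Label.eq0))

/-- A labeled segment is special (the initial sequence stops there): `[0,0]` labeled
`≥0` or `=0` in the integer case; `[1/2,1/2]`, or `[−1/2,1/2]` labeled `≥0` or `=0`
with `ε([−1/2,1/2]) = −1`, in the half-integer case. -/
def Special (ε : Seg → ℤ) (Λ : LSeg) : Prop :=
  (Λ.1 = ((0 : ℤ), (0 : ℤ)) ∧ (Λ.2 = Label.ge0 ∨ Λ.2 = Label.eq0)) ∨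
    Λ.1 = ((1 : ℤ), (1 : ℤ)) ∨
      (Λ.1 = ((-1 : ℤ), (1 : ℤ)) ∧ (Λ.2 = Label.ge0 ∨ Λ.2 = Label.eq0) ∧ ε (-1, 1) = -1)

instance (ε : Seg → ℤ) (Λ : LSeg) : Decidable (Special ε Λ) := by
  unfold Special; infer_instance

/-- The condition for `next` to be a successor of `cur` in the initial sequence:
`next ≺ cur`, `e(next) = e(cur) − 1`, and opposite signs when both are centered. -/
def Succ (ε : Seg → ℤ) (cur next : LSeg) : Prop :=
  LSeg.lt next cur ∧ next.1.2 = cur.1.2 - 2 ∧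
    (cur.1.1 + cur.1.2 = 0 → next.1.1 + next.1.2 = 0 → ε next.1 = - ε cur.1)

/-- `Δ 1, …, Δ l` is the initial sequence in the algorithm for `(m, ε)`:
`Δ 1` is the `⪯`-largest element of `s(m)` with maximal end; recursively,
`Δ (j+1)` is the `⪯`-largest successor of `Δ j`; the sequence stops when the
current segment is special or no successor exists. -/
structure IsInitSeq (m : Multiset Seg) (ε : Seg → ℤ) (Δ : ℕ → LSeg) (l : ℕ) : Prop where
  one_le : 1 ≤ l
  mem : ∀ j, 1 ≤ j → j ≤ l → Δ j ∈ smap m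
  first_max_end : ∀ Λ ∈ smap m, Λ.1.2 ≤ (Δ 1).1.2
  first_max : ∀ Λ ∈ smap m, Λ.1.2 = (Δ 1).1.2 → LSeg.le Λ (Δ 1)
  not_special : ∀ j, 1 ≤ j → j < l → ¬ Special ε (Δ j)
  succ : ∀ j, 1 ≤ j → j < l → Succ ε (Δ j) (Δ (j + 1))
  succ_max : ∀ j, 1 ≤ j → j < l → ∀ Λ ∈ smap m, Succ ε (Δ j) Λ → LSeg.le Λ (Δ (j + 1))
  last : Special ε (Δ l) ∨ ∀ Λ ∈ smap m, ¬ Succ ε (Δ l) Λ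

/-- The sign `ε₀`: `−1` if the sequence stopped at a special segment, `1` otherwise. -/
def eps0 (ε : Seg → ℤ) (Δ : ℕ → LSeg) (l : ℕ) : ℤ :=
  if Special ε (Δ l) then -1 else 1

/-- The number `n₀` of centered segments of `m`. -/
def nCentered (m : Multiset Seg) : ℕ := (m.filter fun Δ => Δ.1 + Δ.2 = 0).card

/-- The sign `ε₁` of the centered segment `𝔪₁` in the case `ε₀ = −1`:
`(−1)^(n₀+1)·ε([0,0])` in the integer case, `(−1)^(n₀)` in the half-integer case. -/
def epsOne (m : Multiset Seg) (ε : Seg → ℤ) (Δ : ℕ → LSeg) : ℤ :=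
  if (Δ 1).1.2 % 2 = 0 then (-1) ^ (nCentered m + 1) * ε (0, 0)
  else (-1) ^ nCentered m

/-- The signed multisegment `𝔪₁`: if `ε₀ = −1` it is the centered segment
`[−e(Δ₁), e(Δ₁)]` with sign `ε₁`; otherwise it is
`[e(Δ_l), e(Δ₁)] + [−e(Δ₁), −e(Δ_l)]` (non-centered segments carry sign `1`). -/
def mOne (m : Multiset Seg) (ε : Seg → ℤ) (Δ : ℕ → LSeg) (l : ℕ) : Multiset (Seg × ℤ) :=
  if Special ε (Δ l) then {((-(Δ 1).1.2, (Δ 1).1.2), epsOne m ε Δ)}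
  else {(((Δ l).1.2, (Δ 1).1.2), 1), ((-(Δ 1).1.2, -(Δ l).1.2), 1)}

/-- The labeled copies `Δ 1, …, Δ l` whose end gets removed. -/
def DEnd (Δ : ℕ → LSeg) (l : ℕ) : Multiset LSeg := (Finset.Icc 1 l).val.map Δ

/-- The labeled copies (the contragredients of the `Δ j`) whose beginning gets removed. -/
def DBeg (Δ : ℕ → LSeg) (l : ℕ) : Multiset LSeg := (DEnd Δ l).map LSeg.dual

/-- The labeled copies trimmed on both sides. -/
def DBoth (Δ : ℕ → LSeg) (l : ℕ) : Multiset LSeg := DEnd Δ l ∩ DBeg Δ l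

/-- The multisegment `𝔪#`: remove the ends of the `Δ j` and the beginnings of their
contragredients (one labeled copy each, both trims if the copy occurs in both lists),
keep all other copies, and discard empty segments. -/
def mHash (m : Multiset Seg) (Δ : ℕ → LSeg) (l : ℕ) : Multiset Seg :=
  (smap m - DEnd Δ l - (DBeg Δ l - DBoth Δ l)).map Prod.fst +
    ((DBoth Δ l).map (fun Λ => ((Λ.1.1 + 2, Λ.1.2 - 2) : Seg)) +
        (DEnd Δ l - DBoth Δ l).map (fun Λ => ((Λ.1.1, Λ.1.2 - 2) : Seg)) +
        (DBeg Δ l - DBoth Δ l).map (fun Λ => ((Λ.1.1 + 2, Λ.1.2) : Seg))).filter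
      fun Δ0 => Δ0.1 ≤ Δ0.2

/-- The trimmed segment `Λ_{i_j}#` obtained from `Δ j`. -/
def trimAt (Δ : ℕ → LSeg) (l : ℕ) (j : ℕ) : Seg :=
  if Δ j ∈ DBeg Δ l then ((Δ j).1.1 + 2, (Δ j).1.2 - 2)
  else ((Δ j).1.1, (Δ j).1.2 - 2)

/-- The sign function `ε#` on (centered) segments of `𝔪#`. -/
def epsHash (m : Multiset Seg) (ε : Seg → ℤ) (Δ : ℕ → LSeg) (l : ℕ) : Seg → ℤ :=
  fun Δ0 =>
    if ∃ j ∈ Finset.Icc 1 l, ((Δ j).1.1 + (Δ j).1.2 = 0 ∧ trimAt Δ l j = Δ0) then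
      eps0 ε Δ l * ε (Δ0.1 - 2, Δ0.2 + 2)
    else if ∃ j ∈ Finset.Icc 1 l,
        ((Δ j).1.1 + (Δ j).1.2 = 2 ∧ trimAt Δ l j = Δ0 ∧ Δ0 ∉ m) then
      eps0 ε Δ l
    else if ∃ j ∈ Finset.Icc 1 l,
        ((Δ j).1.1 + (Δ j).1.2 = 2 ∧ trimAt Δ l j = Δ0 ∧ Δ0 ∈ m) then
      -(eps0 ε Δ l) * ε Δ0
    else eps0 ε Δ l * ε Δ0

/-- The good-parity duality algorithm `AD`, as a relation between the input `(m, ε)`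
and the output signed multisegment: `AD(0) = 0` and
`AD(𝔪, ε) = (𝔪₁, ε₁) + AD(𝔪#, ε#)`. -/
inductive IsAD : Multiset Seg → (Seg → ℤ) → Multiset (Seg × ℤ) → Prop
  | zero (ε : Seg → ℤ) : IsAD 0 ε 0
  | step {m : Multiset Seg} {ε : Seg → ℤ} {Δ : ℕ → LSeg} {l : ℕ} {d : Multiset (Seg × ℤ)}
      (hm : m ≠ 0) (hseq : IsInitSeq m ε Δ l)
      (hrec : IsAD (mHash m Δ l) (epsHash m ε Δ l) d) :
      IsAD m ε (mOne m ε Δ l + d)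

/-- A valid signed symmetric multisegment in the good-parity setting. -/
structure GoodInput (m : Multiset Seg) (ε : Seg → ℤ) : Prop where
  wf : ∀ Δ0 ∈ m, Seg.WF Δ0
  symm : m.map Seg.dual = m
  parity : ∀ Δ₁ ∈ m, ∀ Δ₂ ∈ m, Δ₁.2 % 2 = Δ₂.2 % 2
  sign : ∀ Δ0, ε Δ0 = 1 ∨ ε Δ0 = -1

section Helpers

lemma label_ne_ge0_eq0 : (Label.ge0 : Label) ≠ Label.eq0 := by decide
lemma label_ne_le0_eq0 : (Label.le0 : Label) ≠ Label.eq0 := by decide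

lemma idx_le_two (lab : Label) : lab.idx ≤ 2 := by cases lab <;> simp [Label.idx]

lemma mem_centered_part {m : Multiset Seg} {Δ1 : Seg} {Λ : LSeg}
    (h2 : Λ ∈ Multiset.replicate (m.count Δ1 / 2) ((Δ1, Label.le0) : LSeg) +
        Multiset.replicate (m.count Δ1 / 2) ((Δ1, Label.ge0) : LSeg) +
        Multiset.replicate (m.count Δ1 % 2) ((Δ1, Label.eq0) : LSeg)) :
    Λ.1 = Δ1 := by
  rw [Multiset.mem_add, Multiset.mem_add] at h2
  rcases h2 with (h2 | h2) | h2 <;>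
    simp [Multiset.eq_of_mem_replicate h2]

lemma mem_smap_fst {m : Multiset Seg} {Λ : LSeg} (h : Λ ∈ smap m) : Λ.1 ∈ m := by
  rw [smap, Multiset.mem_add] at h
  rcases h with h | h
  · obtain ⟨Δ1, h1, h2⟩ := Multiset.mem_map.1 h
    have h3 := Multiset.mem_of_mem_filter h1
    have : Λ.1 = Δ1 := by rw [← h2]
    rwa [this]
  · obtain ⟨Δ1, h1, h2⟩ := Multiset.mem_bind.1 h
    rw [Finset.mem_val, Finset.mem_filter, Multiset.mem_toFinset] at h1
    rw [mem_centered_part h2]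
    exact h1.1

lemma smap_cases {m : Multiset Seg} {Λ : LSeg} (h : Λ ∈ smap m) :
    Λ.2 = forcedLabel Λ.1 ∨ Λ.1.1 + Λ.1.2 = 0 := by
  rw [smap, Multiset.mem_add] at h
  rcases h with h | h
  · obtain ⟨Δ1, h1, h2⟩ := Multiset.mem_map.1 h
    left
    rw [← h2]
  · obtain ⟨Δ1, h1, h2⟩ := Multiset.mem_bind.1 h
    right
    rw [Finset.mem_val, Finset.mem_filter] at h1
    rw [mem_centered_part h2]
    exact h1.2

lemma ge0_sum {m : Multiset Seg} {Λ : LSeg} (h : Λ ∈ smap m) (hg : Λ.2 = Label.ge0) :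
    0 ≤ Λ.1.1 + Λ.1.2 := by
  rcases smap_cases h with h' | h'
  · rw [hg, forcedLabel] at h'
    by_contra hc
    rw [if_neg (by omega)] at h'
    exact Label.noConfusion h'
  · omega

lemma le0_sum {m : Multiset Seg} {Λ : LSeg} (h : Λ ∈ smap m) (hg : Λ.2 = Label.le0) :
    Λ.1.1 + Λ.1.2 ≤ 0 := by
  rcases smap_cases h with h' | h'
  · rw [hg, forcedLabel] at h'
    by_contra hc
    rw [if_pos (by omega)] at h'
    exact Label.noConfusion h'
  · omega

lemma eq0_sum {m : Multiset Seg} {Λ : LSeg} (h : Λ ∈ smap m) (hg : Λ.2 = Label.eq0) :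
    Λ.1.1 + Λ.1.2 = 0 := by
  rcases smap_cases h with h' | h'
  · rw [hg, forcedLabel] at h'
    split_ifs at h'
  · exact h'

lemma mem_smap_pos {m : Multiset Seg} {Δ0 : Seg} (hm : Δ0 ∈ m) (hpos : 0 < Δ0.1 + Δ0.2) :
    ((Δ0, Label.ge0) : LSeg) ∈ smap m := by
  rw [smap, Multiset.mem_add]
  left
  refine Multiset.mem_map.2 ⟨Δ0, Multiset.mem_filter.2 ⟨hm, by omega⟩, ?_⟩
  rw [forcedLabel, if_pos hpos]

lemma le0_ge0 {m : Multiset Seg} {Δ0 : Seg} (h : ((Δ0, Label.le0) : LSeg) ∈ smap m)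
    (hc : Δ0.1 + Δ0.2 = 0) : ((Δ0, Label.ge0) : LSeg) ∈ smap m := by
  rw [smap, Multiset.mem_add] at h ⊢
  rcases h with h | h
  · obtain ⟨Δ1, h1, h2⟩ := Multiset.mem_map.1 h
    rw [Multiset.mem_filter] at h1
    have hΔ : Δ1 = Δ0 := congrArg Prod.fst h2
    exact absurd (hΔ ▸ hc) h1.2
  · right
    obtain ⟨Δ1, h1, h2⟩ := Multiset.mem_bind.1 h
    have hΔ : Δ0 = Δ1 := mem_centered_part h2
    subst hΔ
    refine Multiset.mem_bind.2 ⟨Δ0, h1, ?_⟩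
    rw [Multiset.mem_add, Multiset.mem_add] at h2 ⊢
    rcases h2 with (h2 | h2) | h2
    · have hn := (Multiset.mem_replicate.1 h2).1
      exact Or.inl (Or.inr (Multiset.mem_replicate.2 ⟨hn, rfl⟩))
    · exact absurd (Multiset.eq_of_mem_replicate h2) (by simp)
    · exact absurd (Multiset.eq_of_mem_replicate h2) (by simp)

lemma exists_label {m : Multiset Seg} {Δ0 : Seg} (hm : Δ0 ∈ m) :
    ∃ lab, ((Δ0, lab) : LSeg) ∈ smap m := by
  by_cases hc : Δ0.1 + Δ0.2 = 0
  · have h1 : Δ0 ∈ (m.toFinset.filter fun Δ => Δ.1 + Δ.2 = 0).val := by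
      rw [Finset.mem_val, Finset.mem_filter, Multiset.mem_toFinset]
      exact ⟨hm, hc⟩
    have hcount : 0 < m.count Δ0 := Multiset.count_pos.2 hm
    by_cases hpar : m.count Δ0 % 2 = 0
    · refine ⟨Label.ge0, ?_⟩
      rw [smap, Multiset.mem_add]
      refine Or.inr (Multiset.mem_bind.2 ⟨Δ0, h1, ?_⟩)
      rw [Multiset.mem_add, Multiset.mem_add]
      exact Or.inl (Or.inr (Multiset.mem_replicate.2 ⟨by omega, rfl⟩))
    · refine ⟨Label.eq0, ?_⟩
      rw [smap, Multiset.mem_add]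
      refine Or.inr (Multiset.mem_bind.2 ⟨Δ0, h1, ?_⟩)
      rw [Multiset.mem_add]
      exact Or.inr (Multiset.mem_replicate.2 ⟨by omega, rfl⟩)
  · exact ⟨forcedLabel Δ0, by
      rw [smap, Multiset.mem_add]
      exact Or.inl (Multiset.mem_map.2 ⟨Δ0, Multiset.mem_filter.2 ⟨hm, hc⟩, rfl⟩)⟩

lemma le_ge0 {Λ₁ Λ₂ : LSeg} (h : LSeg.le Λ₁ Λ₂) (h1 : Λ₁.2 = Label.ge0) :
    Λ₂.2 = Label.ge0 ∧ Seg.le Λ₁.1 Λ₂.1 := by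
  rcases h with h | ⟨ha, hb⟩
  · rw [h1] at h
    have h2 := idx_le_two Λ₂.2
    have h3 : Label.idx Label.ge0 = 2 := rfl
    omega
  · rw [h1, if_neg (by decide)] at hb
    exact ⟨ha.symm.trans h1, hb⟩

lemma le_le0 {Λ₁ Λ₂ : LSeg} (h : LSeg.le Λ₁ Λ₂) (h2 : Λ₂.2 = Label.le0) :
    Λ₁.2 = Label.le0 ∧ Seg.le Λ₁.1 Λ₂.1 := by
  rcases h with h | ⟨ha, hb⟩
  · rw [h2] at h
    have h3 : Label.idx Label.le0 = 0 := rfl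
    omega
  · have h1 : Λ₁.2 = Label.le0 := ha.trans h2
    rw [h1, if_neg (by decide)] at hb
    exact ⟨h1, hb⟩

end Helpers

lemma lseg_le_ge0 {Λ₁ Λ₂ : LSeg} (h1 : Λ₁.2 = Label.ge0) (h2 : Λ₂.2 = Label.ge0)
    (h : Seg.le Λ₁.1 Λ₂.1) : LSeg.le Λ₁ Λ₂ := by
  refine Or.inr ⟨h1.trans h2.symm, ?_⟩
  rw [h1, if_neg (by decide)]
  exact h

/-- Lemma 7.2.1: if `ε₀ = 1`, then `e(Δ₁) + e(Δ_l) ≠ 0`. -/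
theorem stmt11 (m : Multiset Seg) (ε : Seg → ℤ) (hgood : GoodInput m ε) (hne : m ≠ 0)
    (Δ : ℕ → LSeg) (l : ℕ) (hseq : IsInitSeq m ε Δ l)
    (h : eps0 ε Δ l = 1) :
    (Δ 1).1.2 + (Δ l).1.2 ≠ 0 := by
  intro hsum
  have hns : ¬ Special ε (Δ l) := by
    intro hs
    unfold eps0 at h
    rw [if_pos hs] at h
    norm_num at h
  have h1l := hseq.one_le
  have hmem : ∀ j, 1 ≤ j → j ≤ l → (Δ j).1 ∈ m :=
    fun j hj1 hj2 => mem_smap_fst (hseq.mem j hj1 hj2)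
  have hdualm : ∀ Δ0 ∈ m, Seg.dual Δ0 ∈ m := by
    intro Δ0 h0
    have h1 := Multiset.mem_map_of_mem Seg.dual h0
    rwa [hgood.symm] at h1
  set E := (Δ 1).1.2 with hE
  have hub : ∀ Δ0 ∈ m, Δ0.2 ≤ E := by
    intro Δ0 h0
    obtain ⟨lab, hl⟩ := exists_label h0
    exact hseq.first_max_end _ hl
  have hlb : ∀ Δ0 ∈ m, -E ≤ Δ0.1 := by
    intro Δ0 h0
    have h1 := hub _ (hdualm _ h0)
    have h2 : (Seg.dual Δ0).2 = -Δ0.1 := rfl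
    omega
  have hwf : ∀ j, 1 ≤ j → j ≤ l → (Δ j).1.1 ≤ (Δ j).1.2 ∧ (Δ j).1.1 % 2 = (Δ j).1.2 % 2 :=
    fun j h1 h2 => hgood.wf _ (hmem j h1 h2)
  have hend : ∀ j, 1 ≤ j → j ≤ l → (Δ j).1.2 = E - 2 * ((j : ℤ) - 1) := by
    intro j
    induction j with
    | zero => intro h1 h2; omega
    | succ n ih =>
      intro h1 h2
      rcases Nat.eq_zero_or_pos n with hn | hn
      · subst hn
        push_cast
        omega
      · have hs := (hseq.succ n hn (by omega)).2.1
        have h3 := ih hn (by omega)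
        omega
  have hEnn : 0 ≤ E := by
    have h1 := hlb _ (hmem 1 le_rfl h1l)
    have h2 := (hwf 1 le_rfl h1l).1
    omega
  have hendl := hend l h1l le_rfl
  have hlE : (l : ℤ) = E + 1 := by omega
  have hbl : (Δ l).1.1 = -E := by
    have h1 := hlb _ (hmem l h1l le_rfl)
    have h2 := (hwf l h1l le_rfl).1
    omega
  rcases eq_or_lt_of_le h1l with hl1 | hl2
  · -- l = 1 and E = 0
    have hE0 : E = 0 := by omega
    have hseg : (Δ l).1 = ((0:ℤ), (0:ℤ)) :=
      Prod.ext_iff.2 ⟨show (Δ l).1.1 = 0 by omega, show (Δ l).1.2 = 0 by omega⟩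
    have hlab : (Δ l).2 = Label.le0 := by
      rcases hc : (Δ l).2 with _ | _ | _
      · rfl
      · exact absurd (Or.inl ⟨hseg, Or.inr hc⟩) hns
      · exact absurd (Or.inl ⟨hseg, Or.inl hc⟩) hns
    have hle0 : (((Δ l).1, Label.le0) : LSeg) ∈ smap m := by
      rw [← hlab]
      exact hseq.mem l h1l le_rfl
    have hge0 := le0_ge0 hle0 (by rw [hseg]; norm_num)
    have hfm := hseq.first_max _ hge0 (show (Δ l).1.2 = E by omega)
    have hg := (le_ge0 hfm rfl).1
    rw [← hl1] at hlab
    rw [hlab] at hg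
    exact Label.noConfusion hg
  · -- 2 ≤ l, E ≥ 1
    have hEpos : 0 < E := by omega
    have claimF : ∀ j, 1 ≤ j → j ≤ l → (Δ j).1.2 < 0 → (Δ j).2 = Label.le0 := by
      intro j hj1 hjl hneg
      have hwfj := (hwf j hj1 hjl).1
      rcases hc : (Δ j).2 with _ | _ | _
      · rfl
      · have h7 := eq0_sum (hseq.mem j hj1 hjl) hc
        exact absurd h7 (by omega)
      · have h7 := ge0_sum (hseq.mem j hj1 hjl) hc
        exact absurd h7 (by omega)
    have claimC : ∀ k j, 1 ≤ j → j + k = l → (Δ j).2 = Label.le0 →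
        -E + 2 * (k : ℤ) ≤ (Δ j).1.1 := by
      intro k
      induction k with
      | zero =>
        intro j hj1 hjk _
        have hjl : j = l := by omega
        subst hjl
        omega
      | succ n ih =>
        intro j hj1 hjk hlab
        have hjl : j < l := by omega
        have hsucc := hseq.succ j hj1 hjl
        obtain ⟨hle, hne'⟩ := hsucc.1
        obtain ⟨hlab', hsegle⟩ := le_le0 hle hlab
        have hih := ih (j + 1) (by omega) (by omega) hlab'
        have hend1 := hsucc.2.1
        have hwfj := hwf j hj1 hjl.le
        have hwfj1 := hwf (j + 1) (by omega) (by omega)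
        have hpar := hgood.parity _ (hmem j hj1 hjl.le) _ (hmem (j + 1) (by omega) (by omega))
        rcases hsegle with hlt | ⟨heq, hge⟩
        · omega
        · omega
    have hsing : ∀ j, 1 ≤ j → j ≤ l → (Δ j).2 = Label.le0 →
        (Δ j).1.1 = E - 2 * ((j : ℤ) - 1) := by
      intro j hj1 hjl hlab
      have h1 := claimC (l - j) j hj1 (by omega) hlab
      have h2 := hend j hj1 hjl
      have h3 := (hwf j hj1 hjl).1
      omega
    have hsegl : (Δ l).1 = (-E, -E) :=
      Prod.ext_iff.2 ⟨show (Δ l).1.1 = -E by omega, show (Δ l).1.2 = -E by omega⟩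
    have hEEm : ((E, E) : Seg) ∈ m := by
      have hdl := hdualm _ (hmem l h1l le_rfl)
      rw [hsegl] at hdl
      simpa [Seg.dual] using hdl
    have hm1 : (((E, E) : Seg), Label.ge0) ∈ smap m :=
      mem_smap_pos hEEm (show 0 < E + E by omega)
    have hfm := hseq.first_max _ hm1 (by rw [hE])
    obtain ⟨hg1, hsle1⟩ := le_ge0 hfm rfl
    have hb1 : (Δ 1).1.1 = E := by
      have h3 := (hwf 1 le_rfl h1l).1
      have h6 : ((((E, E) : Seg), Label.ge0) : LSeg).1.1 = E := rfl
      rcases hsle1 with hlt | ⟨heq, -⟩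
      · omega
      · omega
    have hforce : ∀ j, 1 ≤ j → j ≤ l → 0 < (Δ j).1.2 →
        (Δ j).1.1 = (Δ j).1.2 ∧ (Δ j).2 = Label.ge0 := by
      intro j
      induction j with
      | zero => intro h1 h2 h3; exact absurd h1 (by omega)
      | succ n ih =>
        intro hj1 hjl hpos
        rcases Nat.eq_zero_or_pos n with hn | hn
        · subst hn
          have hbb : (Δ 1).1.1 = (Δ 1).1.2 := by omega
          exact ⟨hbb, hg1⟩
        · have hendn1 := hend (n + 1) hj1 hjl
          have hendn := hend n hn (by omega)
          have hpos' : 0 < E - 2 * (n : ℤ) := by omega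
          have hposn : 0 < (Δ n).1.2 := by omega
          obtain ⟨ihb, ihlab⟩ := ih hn (by omega) hposn
          have hj'1 : 1 ≤ l - n := by omega
          have hj'l : l - n ≤ l := by omega
          have hendj' := hend (l - n) hj'1 hj'l
          have hnegj' : (Δ (l - n)).1.2 < 0 := by omega
          have hlabj' := claimF _ hj'1 hj'l hnegj'
          have hbj' := hsing _ hj'1 hj'l hlabj'
          have hsegj' : (Δ (l - n)).1 = (-(E - 2 * (n : ℤ)), -(E - 2 * (n : ℤ))) :=
            Prod.ext_iff.2 ⟨show (Δ (l - n)).1.1 = -(E - 2 * (n:ℤ)) by omega,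
              show (Δ (l - n)).1.2 = -(E - 2 * (n:ℤ)) by omega⟩
          have hmm : ((E - 2 * (n : ℤ), E - 2 * (n : ℤ)) : Seg) ∈ m := by
            have hdl := hdualm _ (hmem (l - n) hj'1 hj'l)
            rw [hsegj'] at hdl
            simpa [Seg.dual] using hdl
          have hcand : (((E - 2 * (n : ℤ), E - 2 * (n : ℤ)) : Seg), Label.ge0) ∈ smap m :=
            mem_smap_pos hmm (show 0 < E - 2 * (n:ℤ) + (E - 2 * (n:ℤ)) by omega)
          have hltc : LSeg.lt (((E - 2 * (n:ℤ), E - 2 * (n:ℤ)) : Seg), Label.ge0) (Δ n) := by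
            constructor
            · exact lseg_le_ge0 rfl ihlab
                (Or.inl (show E - 2 * (n:ℤ) < (Δ n).1.1 by omega))
            · intro hcc
              have h5 : E - 2 * (n:ℤ) = (Δ n).1.2 := congrArg (fun Λ : LSeg => Λ.1.2) hcc
              omega
          have hsucc : Succ ε (Δ n) (((E - 2 * (n:ℤ), E - 2 * (n:ℤ)) : Seg), Label.ge0) := by
            refine ⟨hltc, show E - 2 * (n:ℤ) = (Δ n).1.2 - 2 by omega, ?_⟩
            intro hc1 _
            exfalso
            omega
          have hmax := hseq.succ_max n hn (by omega) _ hcand hsucc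
          obtain ⟨hg, hsle⟩ := le_ge0 hmax rfl
          have hwfn1 := (hwf (n + 1) hj1 hjl).1
          have h6 : ((((E - 2 * (n:ℤ), E - 2 * (n:ℤ)) : Seg), Label.ge0) : LSeg).1.1
              = E - 2 * (n:ℤ) := rfl
          refine ⟨?_, hg⟩
          rcases hsle with hlt | ⟨heq, -⟩
          · omega
          · omega
    have hE2 : E % 2 = 0 ∨ E % 2 = 1 := by omega
    rcases hE2 with hpar0 | hpar1
    · -- integer case
      obtain ⟨k, hk⟩ : ∃ k, l = 2 * k + 1 := ⟨l / 2, by omega⟩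
      have hk1 : 1 ≤ k := by omega
      have hjm1 : 1 ≤ k + 1 := by omega
      have hjml : k + 1 ≤ l := by omega
      have hjmlt : k + 1 < l := by omega
      have hendjm := hend (k + 1) hjm1 hjml
      have hejm : (Δ (k + 1)).1.2 = 0 := by omega
      have hwfjm := (hwf (k + 1) hjm1 hjml).1
      have hlabjm : (Δ (k + 1)).2 = Label.le0 := by
        rcases hc : (Δ (k + 1)).2 with _ | _ | _
        · rfl
        · have h7 := eq0_sum (hseq.mem (k + 1) hjm1 hjml) hc
          have hb7 : (Δ (k + 1)).1.1 = 0 := by omega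
          exact absurd (Or.inl ⟨Prod.ext_iff.2 ⟨hb7, hejm⟩, Or.inr hc⟩)
            (hseq.not_special (k + 1) hjm1 hjmlt)
        · have h7 := ge0_sum (hseq.mem (k + 1) hjm1 hjml) hc
          have hb7 : (Δ (k + 1)).1.1 = 0 := by omega
          exact absurd (Or.inl ⟨Prod.ext_iff.2 ⟨hb7, hejm⟩, Or.inl hc⟩)
            (hseq.not_special (k + 1) hjm1 hjmlt)
      have hbjm := hsing (k + 1) hjm1 hjml hlabjm
      have hsegjm : (Δ (k + 1)).1 = ((0:ℤ), (0:ℤ)) :=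
        Prod.ext_iff.2 ⟨show (Δ (k + 1)).1.1 = 0 by omega, hejm⟩
      have hle0m : ((((0:ℤ), (0:ℤ)) : Seg), Label.le0) ∈ smap m := by
        rw [← hsegjm, ← hlabjm]
        exact hseq.mem (k + 1) hjm1 hjml
      have hge0m := le0_ge0 hle0m (by norm_num)
      have hendk := hend k hk1 (by omega)
      have hek : (Δ k).1.2 = 2 := by omega
      obtain ⟨hbk, hlabk⟩ := hforce k hk1 (by omega) (by omega)
      have hltc : LSeg.lt ((((0:ℤ), (0:ℤ)) : Seg), Label.ge0) (Δ k) := by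
        constructor
        · exact lseg_le_ge0 rfl hlabk (Or.inl (show (0:ℤ) < (Δ k).1.1 by omega))
        · intro hcc
          have h5 : (0:ℤ) = (Δ k).1.2 := congrArg (fun Λ : LSeg => Λ.1.2) hcc
          omega
      have hsucck : Succ ε (Δ k) ((((0:ℤ), (0:ℤ)) : Seg), Label.ge0) := by
        refine ⟨hltc, show (0:ℤ) = (Δ k).1.2 - 2 by omega, ?_⟩
        intro hc1 _
        exfalso
        omega
      have hmax := hseq.succ_max k hk1 (by omega) _ hge0m hsucck
      have hgjm := (le_ge0 hmax rfl).1
      rw [hlabjm] at hgjm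
      exact Label.noConfusion hgjm
    · -- half-integer case
      obtain ⟨k, hk⟩ : ∃ k, l = 2 * k + 2 := ⟨l / 2 - 1, by omega⟩
      have hjm1 : 1 ≤ k + 1 := by omega
      have hjml : k + 1 ≤ l := by omega
      have hjmlt : k + 1 < l := by omega
      have hendjm := hend (k + 1) hjm1 hjml
      have hejm : (Δ (k + 1)).1.2 = 1 := by omega
      obtain ⟨hbjm, -⟩ := hforce (k + 1) hjm1 hjml (by omega)
      exact (hseq.not_special (k + 1) hjm1 hjmlt)
        (Or.inr (Or.inl (Prod.ext_iff.2 ⟨show (Δ (k + 1)).1.1 = 1 by omega, hejm⟩)))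

end AZ
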